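/- Let notation be as in the context and let t ≥ 2. For every I ∈ ℕ^t there exist integers z_{I,K} for K ∈ Λ^t with |K| ≤ |I|, depending only on t and I, such that: every family m : ℕ^t → M with δ^t(m) = 0 satisfies m_I = Σ_{K ∈ Λ^t, |K| ≤ |I|} z_{I,K}·Φ_{|K|, |I|−|K|}(m_K). Moreover, when I ∈ Λ^t one may take z_{I,I} = 1 and z_{I,K} = 0 for K ≠ I. (In particular, an element of the kernel of δ^t is determined by the finite collection of its coefficients indexed by Λ^t in each total degree.) -/

import Mathlib

/-- `Phi φ a c r = (φ - c·a) ∘ (φ - (c+1)·a) ∘ ⋯ ∘ (φ - (c+r-1)·a)`, a composite of pairwise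
commuting endomorphisms (`Phi φ a c 0 = id`). -/
def Phi {R M : Type*} [CommRing R] [AddCommGroup M] [Module R M]
    (φ : Module.End R M) (a : R) (c r : ℕ) : Module.End R M :=
  ((List.range r).map (fun h => φ - (((c + h : ℕ) : R) * a) • 1)).prod

/-- The coefficientwise Čech–Alexander differential `δ^s` attached to the stratification
`ε = (1+aX₁)^{φ/a}`: for a family `m : ℕ^s → M` and `J = (j₁,…,j_{s+1})`,
`δ^s(m)_J = Σ_{(r,u), r+|u|=j₁} (−1)^{|u|} (j₁!/(r!·∏ uᵢ!)) Φ_{c(u,J),r}(m_{u+J'})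
  + Σ_{l} (−1)^l [j_l = 0] m_{J minus l-th entry}`,
where `J' = (j₂,…,j_{s+1})` and `c(u,J) = Σᵢ (uᵢ + j_{i+1})`. -/
def delta {R M : Type*} [CommRing R] [AddCommGroup M] [Module R M]
    (φ : Module.End R M) (a : R) {s : ℕ} (m : (Fin s → ℕ) → M) :
    (Fin (s + 1) → ℕ) → M :=
  fun J =>
    (∑ v ∈ Finset.Nat.antidiagonalTuple (s + 1) (J 0),
        ((-1 : ℤ) ^ (∑ i : Fin s, v i.succ) * (Nat.multinomial Finset.univ v : ℤ)) •
          (Phi φ a (∑ i : Fin s, (v i.succ + J i.succ)) (v 0))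
            (m (fun i => v i.succ + J i.succ)))
      + ∑ l : Fin (s + 1),
          ((-1 : ℤ) ^ ((l : ℕ) + 1)) •
            (if J l = 0 then m (fun i => J (l.succAbove i)) else 0)

/-- `(M, φ)` is `a`-small: for every `k` there is `N` such that
`Φ_n = ∏_{i=0}^{n-1}(φ - i·a)` maps `M` into `p^k·M` for all `n ≥ N`. -/
def IsSmall (p : ℕ) {R M : Type*} [CommRing R] [AddCommGroup M] [Module R M]
    (φ : Module.End R M) (a : R) : Prop :=
  ∀ k : ℕ, ∃ N : ℕ, ∀ n ≥ N, ∀ x : M, ∃ y : M, Phi φ a 0 n x = (p ^ k : ℕ) • y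

/-- Membership in `C^s`: a family `m` of elements of `M` lies in `p^k·M` at all but finitely
many indices, for every `k`. -/
def InC (p : ℕ) {M : Type*} [AddCommGroup M] {ι : Type*} (m : ι → M) : Prop :=
  ∀ k : ℕ, {I : ι | ¬ ∃ y : M, m I = (p ^ k : ℕ) • y}.Finite

/-- `Λ₁` (0-indexed, tuples of length `s+1`): `I 0 = 0` and the smallest nonzero index (if any)
is even (odd and `≥ 3` in the paper's 1-indexed convention); the all-zero tuple is included. -/
def Lambda1 {s : ℕ} (I : Fin (s + 1) → ℕ) : Prop :=
  I 0 = 0 ∧ ∀ j : Fin (s + 1), I j ≠ 0 → (∀ j' < j, I j' = 0) → Even (j : ℕ)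

/-- `Λ₃` (0-indexed, tuples of length `s+1`): `I 0 = 1` and the smallest nonzero index `≥ 1`
(if any) is odd and `≥ 3` (even and `≥ 4` 1-indexed); `(1,0,…,0)` is included. -/
def Lambda3 {s : ℕ} (I : Fin (s + 1) → ℕ) : Prop :=
  I 0 = 1 ∧ ∀ j : Fin (s + 1), I j ≠ 0 → 1 ≤ (j : ℕ) →
    (∀ j' : Fin (s + 1), 1 ≤ (j' : ℕ) → j' < j → I j' = 0) → (Odd (j : ℕ) ∧ 3 ≤ (j : ℕ))

/-- `Λ₄` (0-indexed, tuples of length `s+2 ≥ 2`): `I 0 = 1` and `I 1 ≥ 1`. -/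
def Lambda4 {s : ℕ} (I : Fin (s + 2) → ℕ) : Prop :=
  I 0 = 1 ∧ 1 ≤ I 1

/-- `Λ := Λ₁ ∪ Λ₃ ∪ Λ₄` (Definition 9.7 of the paper). -/
def LambdaAll {s : ℕ} (I : Fin (s + 2) → ℕ) : Prop :=
  Lambda1 I ∨ Lambda3 I ∨ Lambda4 I

namespace S14

/-! ### generic helpers -/

section helpers
variable {k : ℕ}

lemma sum_eq_one_iff (v : Fin k → ℕ) (h : ∑ i, v i = 1) : ∃ i, v = Pi.single i 1 := by
  have hne : ∃ i, v i ≠ 0 := by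
    by_contra hc
    push_neg at hc
    simp [hc] at h
  obtain ⟨i, hi⟩ := hne
  have hsplit := Finset.add_sum_erase Finset.univ v (Finset.mem_univ i)
  rw [h] at hsplit
  have hvi : v i = 1 := by omega
  have hrest : ∑ x ∈ Finset.univ.erase i, v x = 0 := by omega
  refine ⟨i, funext fun j => ?_⟩
  rcases eq_or_ne j i with rfl | hj
  · simp [hvi]
  · have : v j = 0 :=
      (Finset.sum_eq_zero_iff).mp hrest j (Finset.mem_erase.mpr ⟨hj, Finset.mem_univ j⟩)
    simp [this, Pi.single_apply, hj]

lemma antidiagonalTuple_one_eq :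
    Finset.Nat.antidiagonalTuple k 1 = Finset.univ.image (fun i : Fin k => Pi.single i 1) := by
  ext v
  simp only [Finset.Nat.mem_antidiagonalTuple, Finset.mem_image, Finset.mem_univ, true_and]
  constructor
  · intro h
    obtain ⟨i, hi⟩ := sum_eq_one_iff v h
    exact ⟨i, hi.symm⟩
  · rintro ⟨i, rfl⟩
    simp [Pi.single_apply]

lemma multinomial_zero' : Nat.multinomial (Finset.univ : Finset (Fin k)) 0 = 1 := by
  have h := Nat.multinomial_spec (Finset.univ : Finset (Fin k)) 0
  simpa using h

lemma multinomial_single (i : Fin k) :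
    Nat.multinomial (Finset.univ : Finset (Fin k)) (Pi.single i 1) = 1 := by
  have h := Nat.multinomial_spec (Finset.univ : Finset (Fin k)) (Pi.single i 1)
  have h1 : ∏ j, Nat.factorial ((Pi.single i 1 : Fin k → ℕ) j) = 1 := by
    apply Finset.prod_eq_one
    intro j _
    rcases eq_or_ne j i with rfl | hj
    · simp
    · simp [Pi.single_apply, hj]
  have h2 : ∑ j, (Pi.single i 1 : Fin k → ℕ) j = 1 := by simp [Pi.single_apply]
  rw [h1, h2, one_mul] at h
  simpa using h

lemma cons_succAbove_succ (c : ℕ) (T : Fin (k+1) → ℕ) (j : Fin (k+1)) (i : Fin (k+1)) :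
    (Fin.cons c T : Fin (k+2) → ℕ) ((Fin.succ j).succAbove i)
      = (Fin.cons c (fun l : Fin k => T (j.succAbove l)) : Fin (k+1) → ℕ) i := by
  induction i using Fin.cases with
  | zero => rw [Fin.succ_succAbove_zero]; simp
  | succ l => rw [Fin.succ_succAbove_succ]; simp

lemma sum_split_lt {N : Type*} [AddCommMonoid N] {n : ℕ} (p : ℕ) (f : Fin n → N) :
    (∑ j, f j) = (∑ j : Fin n, if (j:ℕ) < p then f j else 0)
      + (∑ j : Fin n, if p ≤ (j:ℕ) then f j else 0) := by
  rw [← Finset.sum_add_distrib]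
  refine Finset.sum_congr rfl fun j _ => ?_
  by_cases h : (j:ℕ) < p
  · simp [h, Nat.not_le.mpr h]
  · simp [h, Nat.le_of_not_lt h]

lemma sum_lt_eq_range {N : Type*} [AddCommMonoid N] {n : ℕ} (p : ℕ) (hp : p ≤ n) (g : ℕ → N) :
    (∑ j : Fin n, if (j:ℕ) < p then g (j:ℕ) else 0) = ∑ i ∈ Finset.range p, g i := by
  rw [Fin.sum_univ_eq_sum_range (fun i => if i < p then g i else 0) n]
  rw [Finset.sum_ite, Finset.sum_const_zero, add_zero]
  congr 1
  ext i
  simp only [Finset.mem_filter, Finset.mem_range]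
  omega

lemma ite_smul_swap {N : Type*} [AddCommGroup N] [Module ℤ N] (P : Prop) [Decidable P]
    (c : ℤ) (x : N) : c • (if P then x else (0:N)) = (if P then c else 0) • x := by
  split <;> simp [zsmul_zero]

end helpers

/-! ### Phi lemmas -/

section phi
variable {R M : Type*} [CommRing R] [AddCommGroup M] [Module R M] (φ : Module.End R M) (a : R)

lemma Phi_zero (c : ℕ) : Phi φ a c 0 = 1 := by simp [Phi]

lemma Phi_add (c r r' : ℕ) : Phi φ a c (r + r') = Phi φ a c r * Phi φ a (c + r) r' := by
  unfold Phi
  rw [List.range_add, List.map_append, List.prod_append]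
  congr 1
  rw [List.map_map]
  have : ((fun h => φ - (((c + h : ℕ) : R) * a) • (1:Module.End R M)) ∘ fun x => r + x)
      = fun h => φ - (((c + r + h : ℕ) : R) * a) • (1:Module.End R M) := by
    funext h
    simp [Function.comp_apply, add_assoc]
  rw [this]

lemma Phi_commute (c r c' r' : ℕ) : Commute (Phi φ a c r) (Phi φ a c' r') := by
  apply Commute.list_prod_right
  intro x hx
  apply Commute.list_prod_left
  intro y hy
  simp only [List.mem_map] at hx hy
  obtain ⟨h1, -, rfl⟩ := hx
  obtain ⟨h2, -, rfl⟩ := hy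
  have key : ∀ u v : R, Commute (φ - u • 1) (φ - v • 1) := by
    intro u v
    apply Commute.sub_left
    · apply Commute.sub_right (Commute.refl φ)
      exact (Commute.one_right φ).smul_right v
    · apply Commute.sub_right
      · exact ((Commute.one_left φ).smul_left u)
      · exact ((Commute.one_right (1:Module.End R M)).smul_left u).smul_right v
  exact key _ _

lemma Phi_comp (d n' n : ℕ) (hd : d ≤ n') (hn : n' ≤ n) (x : M) :
    (Phi φ a n' (n - n')) ((Phi φ a d (n' - d)) x) = (Phi φ a d (n - d)) x := by
  have h1 : Phi φ a d (n - d) = Phi φ a d ((n' - d) + (n - n')) := by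
    congr 1
    omega
  have h2 : d + (n' - d) = n' := by omega
  rw [h1, Phi_add, h2, (Phi_commute φ a d (n'-d) n' (n-n')).eq]
  rfl

end phi

/-! ### master delta computations -/

section master
variable {R M : Type*} [CommRing R] [AddCommGroup M] [Module R M] (φ : Module.End R M) (a : R)
variable {k : ℕ}

lemma delta_cons_zero (m : (Fin (k+1) → ℕ) → M) (T : Fin (k+1) → ℕ) :
    delta φ a m (Fin.cons 0 T) =
      ∑ j : Fin (k+1), (-1:ℤ)^(j:ℕ) •
        (if T j = 0 then m (Fin.cons 0 (fun l => T (j.succAbove l))) else 0) := by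
  unfold delta
  rw [Fin.cons_zero, Finset.Nat.antidiagonalTuple_zero_right, Finset.sum_singleton,
    Fin.sum_univ_succ (n := k+1)]
  simp only [Pi.zero_apply, Fin.cons_succ, Fin.cons_zero, pow_zero, Finset.sum_const_zero,
    multinomial_zero', Nat.cast_one, mul_one, one_smul, Phi_zero, Module.End.one_apply,
    zero_add, Fin.val_zero, if_true, Fin.succAbove_zero, pow_one, Fin.val_succ]
  rw [neg_smul, one_smul, ← add_assoc, add_neg_cancel, zero_add]
  refine Finset.sum_congr rfl fun x _ => ?_
  have hidx : (fun i => (Fin.cons 0 T : Fin (k+2) → ℕ) (x.succ.succAbove i))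
      = Fin.cons 0 (fun l => T (x.succAbove l)) := funext (cons_succAbove_succ 0 T x)
  rw [hidx, pow_succ, pow_succ, mul_neg_one, mul_neg_one, neg_neg]

lemma delta_cons_one (m : (Fin (k+1) → ℕ) → M) (T : Fin (k+1) → ℕ) :
    delta φ a m (Fin.cons 1 T) =
      (Phi φ a (∑ i, T i) 1) (m T)
      - ∑ r : Fin (k+1), m (fun i => (Pi.single r 1 : Fin (k+1) → ℕ) i + T i)
      + ∑ j : Fin (k+1), (-1:ℤ)^(j:ℕ) •
          (if T j = 0 then m (Fin.cons 1 (fun l => T (j.succAbove l))) else 0) := by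
  unfold delta
  rw [Fin.cons_zero, antidiagonalTuple_one_eq, Finset.sum_image (by
    intro x _ y _ hxy
    by_contra hne
    have := congrFun hxy x
    simp [Pi.single_apply, hne] at this), Fin.sum_univ_succ (n := k+1),
    Fin.sum_univ_succ (n := k+1)]
  have h0 : ∀ i : Fin (k+1), (Pi.single (0:Fin (k+2)) 1 : Fin (k+2) → ℕ) i.succ = 0 :=
    fun i => Pi.single_eq_of_ne (Fin.succ_ne_zero i) 1
  have hsx0 : ∀ x : Fin (k+1), (Pi.single x.succ 1 : Fin (k+2) → ℕ) 0 = 0 :=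
    fun x => Pi.single_eq_of_ne (Fin.succ_ne_zero x).symm 1
  have hss : ∀ x i : Fin (k+1), (Pi.single x.succ 1 : Fin (k+2) → ℕ) i.succ
      = (Pi.single x 1 : Fin (k+1) → ℕ) i := by
    intro x i
    simp [Pi.single_apply, Fin.succ_inj]
  have sum_single : ∀ x : Fin (k+1), ∑ i, (Pi.single x 1 : Fin (k+1) → ℕ) i = 1 := by
    intro x; simp [Pi.single_apply]
  simp only [multinomial_single, Nat.cast_one, mul_one, Pi.single_eq_same, Fin.cons_succ,
    Fin.cons_zero, Fin.val_zero, Fin.val_succ, Fin.succAbove_zero, h0, hsx0, hss,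
    Finset.sum_const_zero, pow_zero, one_smul, zero_add, Phi_zero, Module.End.one_apply,
    sum_single, pow_one, if_neg (one_ne_zero (α := ℕ)), smul_zero]
  congr 1
  · rw [sub_eq_add_neg, ← Finset.sum_neg_distrib]
    congr 1
    refine Finset.sum_congr rfl fun x _ => ?_
    rw [neg_one_smul]
  · refine Finset.sum_congr rfl fun x _ => ?_
    have hidx : (fun i => (Fin.cons 1 T : Fin (k+2) → ℕ) (x.succ.succAbove i))
        = Fin.cons 1 (fun l => T (x.succAbove l)) := funext (cons_succAbove_succ 1 T x)
    rw [hidx, pow_succ, pow_succ, mul_neg_one, mul_neg_one, neg_neg]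

end master

/-! ### representation machinery -/

section main
variable {R M : Type*} [CommRing R] [AddCommGroup M] [Module R M] (φ : Module.End R M) (a : R)
variable {s : ℕ}

def bigSum (n : ℕ) (z : (Fin (s+2) → ℕ) → ℤ) (m : (Fin (s+2) → ℕ) → M) : M :=
  ∑ d ∈ Finset.range (n + 1), ∑ K ∈ Finset.Nat.antidiagonalTuple (s+2) d,
    z K • (Phi φ a d (n - d)) (m K)

def Rep (I : Fin (s+2) → ℕ) (z : (Fin (s+2) → ℕ) → ℤ) : Prop :=
  (∀ K, ¬ LambdaAll K → z K = 0) ∧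
  (∀ K : Fin (s+2) → ℕ, (∑ i, I i) < (∑ i, K i) → z K = 0) ∧
  (∀ m : (Fin (s+2) → ℕ) → M, delta φ a m = 0 → m I = bigSum φ a (∑ i, I i) z m)

lemma rep_indicator (I : Fin (s+2) → ℕ) (hI : LambdaAll I) :
    Rep φ a I (fun K => if K = I then 1 else 0) := by
  refine ⟨fun K hK => ?_, fun K hK => ?_, fun m _ => ?_⟩
  · by_cases h : K = I
    · subst h; exact absurd hI hK
    · simp [h]
  · have h : K ≠ I := by rintro rfl; omega
    simp [h]
  · unfold bigSum
    have hterm : ∀ d ∈ Finset.range ((∑ i, I i) + 1),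
        (∑ K ∈ Finset.Nat.antidiagonalTuple (s+2) d,
          (if K = I then (1:ℤ) else 0) • (Phi φ a d ((∑ i, I i) - d)) (m K))
        = if d = (∑ i, I i) then (Phi φ a d ((∑ i, I i) - d)) (m I) else 0 := by
      intro d _
      simp only [ite_smul, one_smul, zero_smul]
      rw [Finset.sum_ite_eq' (Finset.Nat.antidiagonalTuple (s+2) d) I
        (fun K => (Phi φ a d ((∑ i, I i) - d)) (m K))]
      simp only [Finset.Nat.mem_antidiagonalTuple]
      by_cases h : (∑ i, I i) = d
      · simp [h]
      · rw [if_neg h, if_neg (fun hh => h hh.symm)]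
    rw [Finset.sum_congr rfl hterm, Finset.sum_ite_eq' (Finset.range ((∑ i, I i) + 1))
      ((∑ i, I i)) (fun d => (Phi φ a d ((∑ i, I i) - d)) (m I))]
    rw [if_pos (by simp)]
    rw [Nat.sub_self, Phi_zero, Module.End.one_apply]

lemma bigSum_promote (n n' : ℕ) (h : n' ≤ n) (z : (Fin (s+2) → ℕ) → ℤ)
    (hz : ∀ K : Fin (s+2) → ℕ, n' < (∑ i, K i) → z K = 0) (m : (Fin (s+2) → ℕ) → M) :
    (Phi φ a n' (n - n')) (bigSum φ a n' z m) = bigSum φ a n z m := by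
  unfold bigSum
  rw [map_sum]
  have step : ∀ d ∈ Finset.range (n' + 1),
      (Phi φ a n' (n - n')) (∑ K ∈ Finset.Nat.antidiagonalTuple (s+2) d,
        z K • (Phi φ a d (n' - d)) (m K))
      = ∑ K ∈ Finset.Nat.antidiagonalTuple (s+2) d, z K • (Phi φ a d (n - d)) (m K) := by
    intro d hd
    rw [map_sum]
    refine Finset.sum_congr rfl fun K _ => ?_
    rw [map_zsmul]
    congr 1
    exact Phi_comp φ a d n' n (by simp at hd; omega) h (m K)
  rw [Finset.sum_congr rfl step]
  apply Finset.sum_subset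
  · intro d hd
    simp at hd ⊢
    omega
  · intro d _ hd
    apply Finset.sum_eq_zero
    intro K hK
    have : (∑ i, K i) = d := Finset.Nat.mem_antidiagonalTuple.mp hK
    rw [hz K (by simp at hd; omega)]
    simp

lemma rep_of_relation {ι : Type} [Fintype ι] (I : Fin (s+2) → ℕ) (c : ι → ℤ)
    (K' : ι → (Fin (s+2) → ℕ)) (D : ι → ℕ)
    (hD : ∀ j, c j ≠ 0 → (∑ i, K' j i) = D j ∧ D j ≤ (∑ i, I i))
    (hrep : ∀ j, c j ≠ 0 → ∃ z, Rep φ a (K' j) z)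
    (hrel : ∀ m : (Fin (s+2) → ℕ) → M, delta φ a m = 0 →
      m I = ∑ j, c j • (Phi φ a (D j) ((∑ i, I i) - D j)) (m (K' j))) :
    ∃ z, Rep φ a I z := by
  classical
  set n := ∑ i, I i with hn
  let zj : ι → (Fin (s+2) → ℕ) → ℤ := fun j =>
    if h : c j ≠ 0 then (hrep j h).choose else 0
  have hRep : ∀ j, (h : c j ≠ 0) → Rep φ a (K' j) (zj j) := by
    intro j h
    simp only [zj, dif_pos h]
    exact (hrep j h).choose_spec
  refine ⟨fun K => ∑ j, c j * zj j K, ?_, ?_, ?_⟩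
  · intro K hK
    apply Finset.sum_eq_zero
    intro j _
    rcases eq_or_ne (c j) 0 with h | h
    · rw [h, zero_mul]
    · rw [(hRep j h).1 K hK, mul_zero]
  · intro K hK
    apply Finset.sum_eq_zero
    intro j _
    rcases eq_or_ne (c j) 0 with h | h
    · rw [h, zero_mul]
    · have h1 := (hD j h).1
      have h2 := (hD j h).2
      rw [(hRep j h).2.1 K (by omega), mul_zero]
  · intro m hm
    rw [hrel m hm]
    have hterm : ∀ j : ι, c j • (Phi φ a (D j) (n - D j)) (m (K' j))
        = c j • bigSum φ a n (zj j) m := by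
      intro j
      rcases eq_or_ne (c j) 0 with h | h
      · rw [h, zero_smul, zero_smul]
      · congr 1
        obtain ⟨hD1, hD2⟩ := hD j h
        have h22 := (hRep j h).2.2 m hm
        rw [hD1] at h22
        have hp := bigSum_promote φ a n (D j) hD2 (zj j)
          (fun K hK => (hRep j h).2.1 K (by omega)) m
        rw [h22, hp]
    rw [Finset.sum_congr rfl (fun j _ => hterm j)]
    show (∑ j, c j • bigSum φ a n (zj j) m) = _
    unfold bigSum
    simp only [Finset.smul_sum, Finset.sum_smul, mul_smul]
    rw [Finset.sum_comm]
    exact Finset.sum_congr rfl fun d _ => Finset.sum_comm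

end main
end S14

namespace S14
section cases
variable {R M : Type*} [CommRing R] [AddCommGroup M] [Module R M] (φ : Module.End R M) (a : R)
variable {s : ℕ}

lemma sum_head {n : ℕ} (p : ℕ) (hp : p ≤ n) (f : Fin n → M) (x : M)
    (hf : ∀ j : Fin n, (j:ℕ) < p → f j = (-1:ℤ)^(j:ℕ) • x) :
    (∑ j : Fin n, if (j:ℕ) < p then f j else 0) = ((if Even p then 0 else 1 : ℤ)) • x := by
  have h1 : (∑ j : Fin n, if (j:ℕ) < p then f j else 0)
      = ∑ j : Fin n, if (j:ℕ) < p then ((-1:ℤ)^(j:ℕ) • x) else 0 := by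
    refine Finset.sum_congr rfl fun j _ => ?_
    by_cases h : (j:ℕ) < p
    · rw [if_pos h, if_pos h, hf j h]
    · rw [if_neg h, if_neg h]
  rw [h1, sum_lt_eq_range p hp (fun i => (-1:ℤ)^i • x), ← Finset.sum_smul, neg_one_geom_sum]

lemma caseA (I : Fin (s+2) → ℕ) (h0 : I 0 = 0) (P : Fin (s+2)) (hPne : I P ≠ 0)
    (hPmin : ∀ q < P, I q = 0) (hodd : Odd (P:ℕ)) :
    ∃ z, Rep φ a I z := by
  classical
  -- the tuples appearing in the relation
  set K' : Fin (s+2) → (Fin (s+2) → ℕ) :=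
    fun j => Fin.cons 0 (fun l : Fin (s+1) => I (j.succAbove l)) with hK'
  -- index = I for j < P
  have hIdx : ∀ j : Fin (s+2), (j:ℕ) < (P:ℕ) → K' j = I := by
    intro j hj
    funext i
    induction i using Fin.cases with
    | zero => rw [hK']; simp [h0]
    | succ l =>
      rw [hK']
      simp only [Fin.cons_succ]
      by_cases hc : l.castSucc < j
      · rw [Fin.succAbove_of_castSucc_lt _ _ hc]
        have e1 : I l.castSucc = 0 := hPmin _ (by
          rw [Fin.lt_def] at hc ⊢
          simp only [Fin.coe_castSucc] at hc ⊢
          omega)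
        have e2 : I l.succ = 0 := hPmin _ (by
          rw [Fin.lt_def] at hc ⊢
          simp only [Fin.coe_castSucc] at hc
          simp only [Fin.val_succ]
          omega)
        rw [e1, e2]
      · rw [Fin.succAbove_of_le_castSucc _ _ (not_lt.mp hc)]
  -- zero entries of I below P
  have hzero : ∀ j : Fin (s+2), (j:ℕ) < (P:ℕ) → I j = 0 := by
    intro j hj
    exact hPmin j (by rwa [Fin.lt_def])
  -- degree of the relation tuples
  have hdegK : ∀ j : Fin (s+2), I j = 0 → (∑ i, K' j i) = ∑ i, I i := by
    intro j hj
    rw [hK']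
    simp only [Fin.sum_cons, zero_add]
    have hsa := Fin.sum_univ_succAbove I j
    rw [hsa, hj, zero_add]
  refine rep_of_relation φ a I
    (fun j : Fin (s+2) => if (P:ℕ) ≤ (j:ℕ) ∧ I j = 0 then (-1:ℤ)^((j:ℕ)+1) else 0) K' (fun _ => ∑ i, I i)
    ?_ ?_ ?_
  · intro j hc
    have hcond : (P:ℕ) ≤ (j:ℕ) ∧ I j = 0 := by
      by_contra h
      exact hc (by simp only [if_neg h])
    exact ⟨hdegK j hcond.2, le_rfl⟩
  · intro j hc
    have hcond : (P:ℕ) ≤ (j:ℕ) ∧ I j = 0 := by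
      by_contra h
      exact hc (by simp only [if_neg h])
    refine ⟨_, rep_indicator φ a (K' j) (Or.inl ?_)⟩
    -- K' j ∈ Λ₁
    have hPj : (P:ℕ) < (j:ℕ) := by
      rcases Nat.lt_or_ge (P:ℕ) (j:ℕ) with h | h
      · exact h
      · exfalso
        have : P = j := Fin.ext (le_antisymm hcond.1 h)
        exact hPne (this ▸ hcond.2)
    have hPs : (P:ℕ) < s + 1 := by
      have := j.isLt
      omega
    -- (i) entries below P+1 vanish
    have hlow : ∀ q : Fin (s+2), (q:ℕ) < (P:ℕ)+1 → K' j q = 0 := by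
      intro q hq
      induction q using Fin.cases with
      | zero => rw [hK']; simp
      | succ l =>
        rw [hK']
        simp only [Fin.cons_succ]
        have hl : (l:ℕ) < (P:ℕ) := by
          simp only [Fin.val_succ] at hq
          omega
        have hc2 : l.castSucc < j := by
          rw [Fin.lt_def]
          simp only [Fin.coe_castSucc]
          omega
        rw [Fin.succAbove_of_castSucc_lt _ _ hc2]
        exact hPmin _ (by rw [Fin.lt_def]; simpa using hl)
    -- (ii) entry at P+1 is nonzero
    set l0 : Fin (s+1) := ⟨(P:ℕ), hPs⟩ with hl0
    have hhigh : K' j l0.succ ≠ 0 := by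
      rw [hK']
      simp only [Fin.cons_succ]
      have hc2 : l0.castSucc < j := by
        rw [Fin.lt_def]
        simp only [Fin.coe_castSucc, hl0]
        exact hPj
      rw [Fin.succAbove_of_castSucc_lt _ _ hc2]
      have : l0.castSucc = P := Fin.ext (by simp [hl0])
      rw [this]
      exact hPne
    constructor
    · rw [hK']; simp
    · intro q hq hqmin
      have hq1 : (P:ℕ)+1 ≤ (q:ℕ) := by
        by_contra h
        exact hq (hlow q (by omega))
      have hq2 : (q:ℕ) ≤ (P:ℕ)+1 := by
        by_contra h
        have : l0.succ < q := by
          rw [Fin.lt_def]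
          simp only [Fin.val_succ, hl0]
          omega
        exact hhigh (hqmin _ this)
      have : (q:ℕ) = (P:ℕ)+1 := le_antisymm hq2 hq1
      rw [this]
      exact hodd.add_one
  · -- the relation itself
    intro m hm
    have hz : (∑ j : Fin (s+2), (-1:ℤ)^(j:ℕ) •
        (if I j = 0 then m (Fin.cons 0 (fun l => I (j.succAbove l))) else 0)) = 0 := by
      rw [← delta_cons_zero φ a m I, hm, Pi.zero_apply]
    rw [sum_split_lt (P:ℕ) _] at hz
    have hhead := sum_head (P:ℕ) (by omega)
      (fun j : Fin (s+2) => (-1:ℤ)^(j:ℕ) •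
        (if I j = 0 then m (Fin.cons 0 (fun l => I (j.succAbove l))) else 0)) (m I)
      (by
        intro j hj
        have hIj := hIdx j hj
        rw [hK'] at hIj
        simp only [if_pos (hzero j hj), hIj])
    rw [hhead, if_neg (Nat.not_even_iff_odd.mpr hodd), one_smul] at hz
    -- m I = - tail
    have hmi : m I = -(∑ j : Fin (s+2), if (P:ℕ) ≤ (j:ℕ) then (-1:ℤ)^(j:ℕ) •
        (if I j = 0 then m (Fin.cons 0 (fun l => I (j.succAbove l))) else 0) else 0) :=
      eq_neg_of_add_eq_zero_left hz
    rw [hmi, ← Finset.sum_neg_distrib]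
    refine Finset.sum_congr rfl fun j _ => ?_
    by_cases h1 : (P:ℕ) ≤ (j:ℕ)
    · by_cases h2 : I j = 0
      · simp only [if_pos h1, if_pos h2, if_pos (And.intro h1 h2), Nat.sub_self, Phi_zero,
          Module.End.one_apply, pow_succ, mul_neg_one, neg_smul, hK']
      · simp only [if_pos h1, if_neg h2, if_neg (fun hh : _ ∧ _ => h2 hh.2), smul_zero,
          neg_zero, zero_smul]
    · simp only [if_neg h1, if_neg (fun hh : _ ∧ _ => h1 hh.1), neg_zero, zero_smul]

lemma sum_single_univ (q : Fin (s+2)) : ∑ i, (Pi.single q 1 : Fin (s+2) → ℕ) i = 1 := by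
  simp [Pi.single_apply]

lemma caseC (I : Fin (s+2) → ℕ) (h2 : 2 ≤ I 0)
    (hrepT : ∃ z, Rep φ a (Function.update I 0 (I 0 - 1)) z)
    (hrepδ : ∀ r : Fin (s+1), ∃ z, Rep φ a
      (fun i => (Pi.single r.succ 1 : Fin (s+2) → ℕ) i + Function.update I 0 (I 0 - 1) i) z)
    (hrepD : ∀ j : Fin (s+2), Function.update I 0 (I 0 - 1) j = 0 →
      ∃ z, Rep φ a
        (Fin.cons 1 (fun l : Fin (s+1) => Function.update I 0 (I 0 - 1) (j.succAbove l))) z) :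
    ∃ z, Rep φ a I z := by
  classical
  set T : Fin (s+2) → ℕ := Function.update I 0 (I 0 - 1) with hT
  have hsT : (∑ i, T i) + 1 = ∑ i, I i := by
    rw [hT]
    rw [Finset.sum_update_of_mem (Finset.mem_univ 0)]
    have h := Finset.sum_eq_sum_sdiff_singleton_add (Finset.mem_univ (0 : Fin (s+2))) I
    omega
  have hsδ : ∀ r : Fin (s+1),
      (∑ i, ((Pi.single r.succ 1 : Fin (s+2) → ℕ) i + T i)) = ∑ i, I i := by
    intro r
    rw [Finset.sum_add_distrib, sum_single_univ]
    omega
  have hsD : ∀ j : Fin (s+2), T j = 0 →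
      (∑ i, (Fin.cons 1 (fun l : Fin (s+1) => T (j.succAbove l)) : Fin (s+2) → ℕ) i)
        = ∑ i, I i := by
    intro j hj
    rw [Fin.sum_cons]
    have hsa : ∑ i, T i = ∑ l : Fin (s+1), T (j.succAbove l) := by
      have h' := Fin.sum_univ_succAbove T j
      rw [hj, zero_add] at h'
      exact h'
    omega
  have hI0T : (fun i => (Pi.single (0 : Fin (s+2)) 1 : Fin (s+2) → ℕ) i + T i) = I := by
    funext i
    rcases eq_or_ne i 0 with rfl | hi
    · rw [hT]
      simp only [Pi.single_eq_same, Function.update_self]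
      omega
    · rw [hT]
      simp [Pi.single_eq_of_ne hi, Function.update_of_ne hi]
  refine rep_of_relation φ a I
    (c := Sum.elim (fun _ : Unit => (1:ℤ)) (Sum.elim (fun _ : Fin (s+1) => (-1:ℤ))
      (fun j : Fin (s+2) => if T j = 0 then (-1:ℤ)^(j:ℕ) else 0)))
    (K' := Sum.elim (fun _ : Unit => T) (Sum.elim
      (fun r : Fin (s+1) => fun i => (Pi.single r.succ 1 : Fin (s+2) → ℕ) i + T i)
      (fun j : Fin (s+2) => Fin.cons 1 (fun l : Fin (s+1) => T (j.succAbove l)))))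
    (D := Sum.elim (fun _ : Unit => ∑ i, T i) (fun _ => ∑ i, I i))
    ?_ ?_ ?_
  · rintro (u | r | j) hc
    · refine ⟨rfl, ?_⟩
      simp only [Sum.elim_inl]
      omega
    · exact ⟨hsδ r, le_rfl⟩
    · have hj : T j = 0 := by
        by_contra h
        exact hc (by simp only [Sum.elim_inr, if_neg h])
      exact ⟨hsD j hj, le_rfl⟩
  · rintro (u | r | j) hc
    · exact hrepT
    · exact hrepδ r
    · have hj : T j = 0 := by
        by_contra h
        exact hc (by simp only [Sum.elim_inr, if_neg h])
      exact hrepD j hj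
  · intro m hm
    have heq : ((Phi φ a (∑ i, T i) 1) (m T)
        - ∑ r : Fin (s+2), m (fun i => (Pi.single r 1 : Fin (s+2) → ℕ) i + T i)
        + ∑ j : Fin (s+2), (-1:ℤ)^(j:ℕ) •
            (if T j = 0 then m (Fin.cons 1 (fun l => T (j.succAbove l))) else 0)) = 0 := by
      rw [← delta_cons_one φ a m T, hm, Pi.zero_apply]
    have hr : (∑ r : Fin (s+2), m (fun i => (Pi.single r 1 : Fin (s+2) → ℕ) i + T i))
        = m I + ∑ r : Fin (s+1), m (fun i => (Pi.single r.succ 1 : Fin (s+2) → ℕ) i + T i) := by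
      rw [Fin.sum_univ_succ
        (f := fun r : Fin (s+2) => m (fun i => (Pi.single r 1 : Fin (s+2) → ℕ) i + T i))]
      rw [hI0T]
    rw [hr] at heq
    rw [Fintype.sum_sum_type, Fintype.sum_sum_type, Fintype.sum_unique]
    simp only [Sum.elim_inl, Sum.elim_inr, one_smul]
    have e1 : (∑ i, I i) - (∑ i, T i) = 1 := by omega
    rw [e1]
    have e2 : (∑ i, I i) - (∑ i, I i) = 0 := Nat.sub_self _
    rw [e2, Phi_zero]
    simp only [Module.End.one_apply, neg_one_smul]
    rw [Finset.sum_neg_distrib]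
    have e3 : (∑ j : Fin (s+2), (if T j = 0 then (-1:ℤ)^(j:ℕ) else 0) •
          m (Fin.cons 1 (fun l => T (j.succAbove l))))
        = ∑ j : Fin (s+2), (-1:ℤ)^(j:ℕ) •
            (if T j = 0 then m (Fin.cons 1 (fun l => T (j.succAbove l))) else 0) := by
      refine Finset.sum_congr rfl fun j _ => ?_
      rw [ite_smul_swap]
    rw [e3]
    have hre : (Phi φ a (∑ i, T i) 1) (m T)
        - (m I + ∑ r : Fin (s+1), m (fun i => (Pi.single r.succ 1 : Fin (s+2) → ℕ) i + T i))
        + ∑ j : Fin (s+2), (-1:ℤ)^(j:ℕ) •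
            (if T j = 0 then m (Fin.cons 1 (fun l => T (j.succAbove l))) else 0)
        = ((Phi φ a (∑ i, T i) 1) (m T)
          + -∑ r : Fin (s+1), m (fun i => (Pi.single r.succ 1 : Fin (s+2) → ℕ) i + T i)
          + ∑ j : Fin (s+2), (-1:ℤ)^(j:ℕ) •
            (if T j = 0 then m (Fin.cons 1 (fun l => T (j.succAbove l))) else 0))
          - m I := by abel
    rw [hre] at heq
    have hfin := (sub_eq_zero.mp heq).symm
    rw [add_assoc] at hfin
    exact hfin

lemma caseB (I : Fin (s+2) → ℕ) (h0 : I 0 = 1) (P : Fin (s+2)) (hPne : I P ≠ 0)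
    (hP2 : 2 ≤ (P:ℕ)) (hPmin : ∀ q : Fin (s+2), 1 ≤ (q:ℕ) → q < P → I q = 0)
    (heven : Even (P:ℕ))
    (hrepT : ∃ z, Rep φ a (Function.update I 0 0) z)
    (hrepδ : ∀ r : Fin (s+1), ∃ z, Rep φ a
      (fun i => (Pi.single r.succ 1 : Fin (s+2) → ℕ) i + Function.update I 0 0 i) z) :
    ∃ z, Rep φ a I z := by
  classical
  set T : Fin (s+2) → ℕ := Function.update I 0 0 with hT
  have hsT : (∑ i, T i) + 1 = ∑ i, I i := by
    rw [hT]
    rw [Finset.sum_update_of_mem (Finset.mem_univ 0)]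
    have h := Finset.sum_eq_sum_sdiff_singleton_add (Finset.mem_univ (0 : Fin (s+2))) I
    omega
  have hsδ : ∀ r : Fin (s+1),
      (∑ i, ((Pi.single r.succ 1 : Fin (s+2) → ℕ) i + T i)) = ∑ i, I i := by
    intro r
    rw [Finset.sum_add_distrib, sum_single_univ]
    omega
  have hsD : ∀ j : Fin (s+2), T j = 0 →
      (∑ i, (Fin.cons 1 (fun l : Fin (s+1) => T (j.succAbove l)) : Fin (s+2) → ℕ) i)
        = ∑ i, I i := by
    intro j hj
    rw [Fin.sum_cons]
    have hsa : ∑ i, T i = ∑ l : Fin (s+1), T (j.succAbove l) := by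
      have h' := Fin.sum_univ_succAbove T j
      rw [hj, zero_add] at h'
      exact h'
    omega
  have hI0T : (fun i => (Pi.single (0 : Fin (s+2)) 1 : Fin (s+2) → ℕ) i + T i) = I := by
    funext i
    rcases eq_or_ne i 0 with rfl | hi
    · rw [hT]
      simp only [Pi.single_eq_same, Function.update_self]
      omega
    · rw [hT]
      simp [Pi.single_eq_of_ne hi, Function.update_of_ne hi]
  -- entries of T below P vanish
  have hTzero : ∀ j : Fin (s+2), (j:ℕ) < (P:ℕ) → T j = 0 := by
    intro j hj
    rcases eq_or_ne j 0 with rfl | hne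
    · rw [hT]; simp
    · rw [hT, Function.update_of_ne hne]
      exact hPmin j (by
        have := Fin.pos_iff_ne_zero.mpr hne
        omega) (by rwa [Fin.lt_def])
  -- T P = I P ≠ 0
  have hTP : T P ≠ 0 := by
    rw [hT, Function.update_of_ne (by
      intro h
      rw [h] at hP2
      simp at hP2)]
    exact hPne
  -- index = I for j < P
  have hIdx : ∀ j : Fin (s+2), (j:ℕ) < (P:ℕ) →
      (Fin.cons 1 (fun l : Fin (s+1) => T (j.succAbove l)) : Fin (s+2) → ℕ) = I := by
    intro j hj
    funext i
    induction i using Fin.cases with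
    | zero => simp [h0]
    | succ l =>
      simp only [Fin.cons_succ]
      by_cases hc : l.castSucc < j
      · rw [Fin.succAbove_of_castSucc_lt _ _ hc]
        have hlv : (l:ℕ) < (j:ℕ) := by
          rw [Fin.lt_def] at hc
          simpa using hc
        have e1 : T l.castSucc = 0 := hTzero _ (by
          simp only [Fin.coe_castSucc]
          omega)
        have e2 : I l.succ = 0 := hPmin _ (by simp) (by
          rw [Fin.lt_def]
          simp only [Fin.val_succ]
          omega)
        rw [e1, e2]
      · rw [Fin.succAbove_of_le_castSucc _ _ (not_lt.mp hc), hT,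
          Function.update_of_ne (Fin.succ_ne_zero l)]
  refine rep_of_relation φ a I
    (c := Sum.elim (fun _ : Unit => (1:ℤ)) (Sum.elim (fun _ : Fin (s+1) => (-1:ℤ))
      (fun j : Fin (s+2) => if (P:ℕ) ≤ (j:ℕ) ∧ T j = 0 then (-1:ℤ)^(j:ℕ) else 0)))
    (K' := Sum.elim (fun _ : Unit => T) (Sum.elim
      (fun r : Fin (s+1) => fun i => (Pi.single r.succ 1 : Fin (s+2) → ℕ) i + T i)
      (fun j : Fin (s+2) => Fin.cons 1 (fun l : Fin (s+1) => T (j.succAbove l)))))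
    (D := Sum.elim (fun _ : Unit => ∑ i, T i) (fun _ => ∑ i, I i))
    ?_ ?_ ?_
  · rintro (u | r | j) hc
    · refine ⟨rfl, ?_⟩
      simp only [Sum.elim_inl]
      omega
    · exact ⟨hsδ r, le_rfl⟩
    · have hj : (P:ℕ) ≤ (j:ℕ) ∧ T j = 0 := by
        by_contra h
        exact hc (by simp only [Sum.elim_inr, if_neg h])
      exact ⟨hsD j hj.2, le_rfl⟩
  · rintro (u | r | j) hc
    · exact hrepT
    · exact hrepδ r
    · have hj : (P:ℕ) ≤ (j:ℕ) ∧ T j = 0 := by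
        by_contra h
        exact hc (by simp only [Sum.elim_inr, if_neg h])
      refine ⟨_, rep_indicator φ a _ (Or.inr (Or.inl ?_))⟩
      -- Λ₃ membership
      have hPj : (P:ℕ) < (j:ℕ) := by
        rcases Nat.lt_or_ge (P:ℕ) (j:ℕ) with h | h
        · exact h
        · exfalso
          have : P = j := Fin.ext (le_antisymm hj.1 h)
          exact hTP (this ▸ hj.2)
      have hPs : (P:ℕ) < s + 1 := by
        have := j.isLt
        omega
      set l0 : Fin (s+1) := ⟨(P:ℕ), hPs⟩ with hl0
      have hlow : ∀ q : Fin (s+2), 1 ≤ (q:ℕ) → (q:ℕ) < (P:ℕ)+1 →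
          (Fin.cons 1 (fun l : Fin (s+1) => T (j.succAbove l)) : Fin (s+2) → ℕ) q = 0 := by
        intro q hq1 hq2
        induction q using Fin.cases with
        | zero => simp at hq1
        | succ l =>
          simp only [Fin.cons_succ]
          have hl : (l:ℕ) < (P:ℕ) := by
            simp only [Fin.val_succ] at hq2
            omega
          have hc2 : l.castSucc < j := by
            rw [Fin.lt_def]
            simp only [Fin.coe_castSucc]
            omega
          rw [Fin.succAbove_of_castSucc_lt _ _ hc2]
          exact hTzero _ (by simpa using hl)
      have hhigh : (Fin.cons 1 (fun l : Fin (s+1) => T (j.succAbove l)) : Fin (s+2) → ℕ)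
          l0.succ ≠ 0 := by
        simp only [Fin.cons_succ]
        have hc2 : l0.castSucc < j := by
          rw [Fin.lt_def]
          simp only [Fin.coe_castSucc, hl0]
          exact hPj
        rw [Fin.succAbove_of_castSucc_lt _ _ hc2]
        have : l0.castSucc = P := Fin.ext (by simp [hl0])
        rw [this]
        exact hTP
      constructor
      · simp
      · intro q hq hq1 hqmin
        have ha : (P:ℕ)+1 ≤ (q:ℕ) := by
          by_contra h
          exact hq (hlow q hq1 (by omega))
        have hb : (q:ℕ) ≤ (P:ℕ)+1 := by
          by_contra h
          refine hhigh (hqmin l0.succ (by simp [hl0]) ?_)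
          rw [Fin.lt_def]
          simp only [Fin.val_succ, hl0]
          omega
        have hq' : (q:ℕ) = (P:ℕ)+1 := le_antisymm hb ha
        rw [hq']
        exact ⟨heven.add_one, by omega⟩
  · intro m hm
    have heq : ((Phi φ a (∑ i, T i) 1) (m T)
        - ∑ r : Fin (s+2), m (fun i => (Pi.single r 1 : Fin (s+2) → ℕ) i + T i)
        + ∑ j : Fin (s+2), (-1:ℤ)^(j:ℕ) •
            (if T j = 0 then m (Fin.cons 1 (fun l => T (j.succAbove l))) else 0)) = 0 := by
      rw [← delta_cons_one φ a m T, hm, Pi.zero_apply]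
    have hr : (∑ r : Fin (s+2), m (fun i => (Pi.single r 1 : Fin (s+2) → ℕ) i + T i))
        = m I + ∑ r : Fin (s+1), m (fun i => (Pi.single r.succ 1 : Fin (s+2) → ℕ) i + T i) := by
      rw [Fin.sum_univ_succ
        (f := fun r : Fin (s+2) => m (fun i => (Pi.single r 1 : Fin (s+2) → ℕ) i + T i))]
      rw [hI0T]
    rw [hr] at heq
    -- split the Dirac sum at P
    rw [sum_split_lt (P:ℕ) (fun j : Fin (s+2) => (-1:ℤ)^(j:ℕ) •
        (if T j = 0 then m (Fin.cons 1 (fun l => T (j.succAbove l))) else 0))] at heq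
    have hhead := sum_head (P:ℕ) (by omega)
      (fun j : Fin (s+2) => (-1:ℤ)^(j:ℕ) •
        (if T j = 0 then m (Fin.cons 1 (fun l => T (j.succAbove l))) else 0)) (m I)
      (by
        intro j hj
        simp only [if_pos (hTzero j hj), hIdx j hj])
    rw [hhead, if_pos heven, zero_smul, zero_add] at heq
    rw [Fintype.sum_sum_type, Fintype.sum_sum_type, Fintype.sum_unique]
    simp only [Sum.elim_inl, Sum.elim_inr, one_smul]
    have e1 : (∑ i, I i) - (∑ i, T i) = 1 := by omega
    rw [e1]
    have e2 : (∑ i, I i) - (∑ i, I i) = 0 := Nat.sub_self _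
    rw [e2, Phi_zero]
    simp only [Module.End.one_apply, neg_one_smul]
    rw [Finset.sum_neg_distrib]
    have e3 : (∑ j : Fin (s+2), (if (P:ℕ) ≤ (j:ℕ) ∧ T j = 0 then (-1:ℤ)^(j:ℕ) else 0) •
          m (Fin.cons 1 (fun l => T (j.succAbove l))))
        = ∑ j : Fin (s+2), if (P:ℕ) ≤ (j:ℕ) then ((-1:ℤ)^(j:ℕ) •
            (if T j = 0 then m (Fin.cons 1 (fun l => T (j.succAbove l))) else 0)) else 0 := by
      refine Finset.sum_congr rfl fun j _ => ?_
      by_cases h1 : (P:ℕ) ≤ (j:ℕ)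
      · rw [if_pos h1, ite_smul_swap]
        congr 1
        by_cases h2 : T j = 0
        · rw [if_pos h2, if_pos ⟨h1, h2⟩]
        · rw [if_neg h2, if_neg (fun hh : _ ∧ _ => h2 hh.2)]
      · rw [if_neg h1, if_neg (fun hh : _ ∧ _ => h1 hh.1), zero_smul]
    rw [e3]
    have hre : (Phi φ a (∑ i, T i) 1) (m T)
        - (m I + ∑ r : Fin (s+1), m (fun i => (Pi.single r.succ 1 : Fin (s+2) → ℕ) i + T i))
        + ∑ j : Fin (s+2), (if (P:ℕ) ≤ (j:ℕ) then ((-1:ℤ)^(j:ℕ) •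
            (if T j = 0 then m (Fin.cons 1 (fun l => T (j.succAbove l))) else 0)) else 0)
        = ((Phi φ a (∑ i, T i) 1) (m T)
          + (-∑ r : Fin (s+1), m (fun i => (Pi.single r.succ 1 : Fin (s+2) → ℕ) i + T i)
          + ∑ j : Fin (s+2), (if (P:ℕ) ≤ (j:ℕ) then ((-1:ℤ)^(j:ℕ) •
            (if T j = 0 then m (Fin.cons 1 (fun l => T (j.succAbove l))) else 0)) else 0)))
          - m I := by abel
    rw [hre] at heq
    exact (sub_eq_zero.mp heq).symm

lemma measure_lt_of_deg_lt {n' n i0' i0 : ℕ} (h : n' < n) (h2 : i0' ≤ n') :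
    n' * (n' + 1) + i0' < n * (n + 1) + i0 := by nlinarith

lemma sum_update0 (I : Fin (s+2) → ℕ) (b : ℕ) :
    (∑ i, Function.update I 0 b i) + I 0 = b + ∑ i, I i := by
  rw [Finset.sum_update_of_mem (Finset.mem_univ 0)]
  have h := Finset.sum_eq_sum_sdiff_singleton_add (Finset.mem_univ (0 : Fin (s+2))) I
  omega

lemma exists_rep : ∀ (N : ℕ) (I : Fin (s+2) → ℕ),
    (∑ i, I i) * ((∑ i, I i) + 1) + I 0 ≤ N → ∃ z, Rep φ a I z := by
  intro N
  induction N using Nat.strong_induction_on with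
  | _ N ih =>
  intro I hN
  by_cases hΛ : LambdaAll I
  · exact ⟨_, rep_indicator φ a I hΛ⟩
  have IH : ∀ K : Fin (s+2) → ℕ,
      (∑ i, K i) * ((∑ i, K i) + 1) + K 0 < (∑ i, I i) * ((∑ i, I i) + 1) + I 0 →
      ∃ z, Rep φ a K z := by
    intro K hK
    exact ih ((∑ i, K i) * ((∑ i, K i) + 1) + K 0) (by omega) K le_rfl
  rcases Nat.lt_or_ge (I 0) 1 with h1 | h1
  · -- I 0 = 0 : case A
    have h0 : I 0 = 0 := by omega
    have hne : ∃ j : Fin (s+2), I j ≠ 0 := by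
      by_contra hc
      push_neg at hc
      exact hΛ (Or.inl ⟨h0, fun j hj _ => absurd (hc j) hj⟩)
    classical
    have hex : ∃ P : Fin (s+2), I P ≠ 0 ∧ (∀ q < P, I q = 0) ∧ (∀ j, I j ≠ 0 → P ≤ j) := by
      have hSne : (Finset.univ.filter (fun j : Fin (s+2) => I j ≠ 0)).Nonempty :=
        ⟨hne.choose, by simp [hne.choose_spec]⟩
      refine ⟨(Finset.univ.filter (fun j : Fin (s+2) => I j ≠ 0)).min' hSne, ?_, ?_, ?_⟩
      · have hmem := Finset.min'_mem _ hSne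
        rw [Finset.mem_filter] at hmem
        exact hmem.2
      · intro q hq
        by_contra hc
        exact absurd hq (not_lt.mpr (Finset.min'_le _ q (by simp [hc])))
      · intro j hj
        exact Finset.min'_le _ j (by simp [hj])
    obtain ⟨P, hPne, hPmin, hPleast⟩ := hex
    have hodd : Odd (P:ℕ) := by
      rw [← Nat.not_even_iff_odd]
      intro hev
      apply hΛ
      left
      refine ⟨h0, fun j hj hjmin => ?_⟩
      have hPj : P ≤ j := hPleast j hj
      have : j = P := by
        rcases eq_or_lt_of_le hPj with h | h
        · exact h.symm
        · exact absurd (hjmin P h) hPne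
      rw [this]
      exact hev
    exact caseA φ a I h0 P hPne hPmin hodd
  rcases Nat.lt_or_ge (I 0) 2 with h2 | h2
  · -- I 0 = 1
    have h0 : I 0 = 1 := by omega
    have h10 : I 1 = 0 := by
      by_contra hc
      exact hΛ (Or.inr (Or.inr ⟨h0, by omega⟩))
    classical
    have hne : ∃ j : Fin (s+2), 1 ≤ (j:ℕ) ∧ I j ≠ 0 := by
      by_contra hc
      push_neg at hc
      apply hΛ
      right; left
      exact ⟨h0, fun j hj hj1 _ => absurd (hc j hj1) (fun h => hj h)⟩
    have hex : ∃ P : Fin (s+2), (1 ≤ (P:ℕ) ∧ I P ≠ 0)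
        ∧ (∀ q : Fin (s+2), 1 ≤ (q:ℕ) → q < P → I q = 0)
        ∧ (∀ j : Fin (s+2), 1 ≤ (j:ℕ) → I j ≠ 0 → P ≤ j) := by
      have hSne : (Finset.univ.filter (fun q : Fin (s+2) => 1 ≤ (q:ℕ) ∧ I q ≠ 0)).Nonempty :=
        ⟨hne.choose, by simp [hne.choose_spec]⟩
      refine ⟨(Finset.univ.filter (fun q : Fin (s+2) => 1 ≤ (q:ℕ) ∧ I q ≠ 0)).min' hSne,
        ?_, ?_, ?_⟩
      · have hmem := Finset.min'_mem _ hSne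
        rw [Finset.mem_filter] at hmem
        exact hmem.2
      · intro q hq1 hq
        by_contra hc
        exact absurd hq (not_lt.mpr (Finset.min'_le _ q (by simp [hq1, hc])))
      · intro j hj1 hj
        exact Finset.min'_le _ j (by simp [hj1, hj])
    obtain ⟨⟨hP1, hPne⟩, hPmin, hPleast⟩ := hex.choose_spec
    set P := hex.choose with hPdef
    have hP2 : 2 ≤ (P:ℕ) := by
      rcases Nat.lt_or_ge (P:ℕ) 2 with h | h
      · exfalso
        have : (P:ℕ) = 1 := by omega
        have hPeq : P = (1 : Fin (s+2)) := by
          apply Fin.ext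
          rw [this]
          simp [Fin.val_one]
        exact hPne (by rw [hPeq]; exact h10)
      · exact h
    by_cases hodd : Odd (P:ℕ)
    · exfalso
      apply hΛ
      right; left
      refine ⟨h0, fun j hj hj1 hjmin => ?_⟩
      have hPj : P ≤ j := hPleast j hj1 hj
      have hjP : j = P := by
        rcases eq_or_lt_of_le hPj with h | h
        · exact h.symm
        · exact absurd (hjmin P hP1 h) hPne
      rw [hjP]
      refine ⟨hodd, ?_⟩
      rcases hodd with ⟨t, ht⟩
      omega
    · rw [Nat.not_odd_iff_even] at hodd
      -- supply IH representations
      have hn1 : 1 ≤ ∑ i, I i := by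
        calc 1 = I 0 := h0.symm
        _ ≤ ∑ i, I i := Finset.single_le_sum (fun i _ => Nat.zero_le _) (Finset.mem_univ 0)
      have hsT := sum_update0 I 0
      refine caseB φ a I h0 P hPne hP2 hPmin hodd ?_ ?_
      · apply IH
        apply measure_lt_of_deg_lt
        · omega
        · rw [Function.update_self]
          exact Nat.zero_le _
      · intro r
        apply IH
        have hdeg : (∑ i, ((Pi.single r.succ 1 : Fin (s+2) → ℕ) i + Function.update I 0 0 i))
            = ∑ i, I i := by
          rw [Finset.sum_add_distrib, sum_single_univ]
          omega
        rw [hdeg]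
        apply Nat.add_lt_add_left
        have : (Pi.single r.succ 1 : Fin (s+2) → ℕ) 0 = 0 :=
          Pi.single_eq_of_ne (Fin.succ_ne_zero r).symm 1
        simp only [Pi.add_apply, this, Function.update_self, zero_add]
        omega
  · -- I 0 ≥ 2 : case C
    have hn1 : 2 ≤ ∑ i, I i := by
      calc 2 ≤ I 0 := h2
      _ ≤ ∑ i, I i := Finset.single_le_sum (fun i _ => Nat.zero_le _) (Finset.mem_univ 0)
    have hsT := sum_update0 I (I 0 - 1)
    refine caseC φ a I h2 ?_ ?_ ?_
    · apply IH
      apply measure_lt_of_deg_lt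
      · omega
      · rw [Function.update_self]
        have h := Finset.single_le_sum (f := Function.update I 0 (I 0 - 1))
          (fun i _ => Nat.zero_le _) (Finset.mem_univ 0)
        rw [Function.update_self] at h
        exact h
    · intro r
      apply IH
      have hdeg : (∑ i, ((Pi.single r.succ 1 : Fin (s+2) → ℕ) i
          + Function.update I 0 (I 0 - 1) i)) = ∑ i, I i := by
        rw [Finset.sum_add_distrib, sum_single_univ]
        omega
      rw [hdeg]
      apply Nat.add_lt_add_left
      have : (Pi.single r.succ 1 : Fin (s+2) → ℕ) 0 = 0 :=
        Pi.single_eq_of_ne (Fin.succ_ne_zero r).symm 1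
      simp only [Pi.add_apply, this, Function.update_self, zero_add]
      omega
    · intro j hj
      apply IH
      have hdeg : (∑ i, (Fin.cons 1 (fun l : Fin (s+1) =>
          Function.update I 0 (I 0 - 1) (j.succAbove l)) : Fin (s+2) → ℕ) i) = ∑ i, I i := by
        rw [Fin.sum_cons]
        have hsa : ∑ i, Function.update I 0 (I 0 - 1) i
            = ∑ l : Fin (s+1), Function.update I 0 (I 0 - 1) (j.succAbove l) := by
          have h' := Fin.sum_univ_succAbove (Function.update I 0 (I 0 - 1)) j
          rw [hj, zero_add] at h'
          exact h'
        omega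
      rw [hdeg]
      apply Nat.add_lt_add_left
      simp only [Fin.cons_zero]
      omega

end cases
end S14

/-- Proposition 9.8 of the paper: every coefficient `m_I` of an element of the
kernel of `δ^t` is `Σ_{K∈Λ^t,|K|≤|I|} z_{I,K}·Φ_{|K|,|I|−|K|}(m_K)` for integers `z` depending
only on `t` and `I`, with `z` the indicator of `I` when `I ∈ Λ^t`. (The paper's dimension
`t ≥ 2` is encoded as `s + 2` for `s : ℕ`.) -/
theorem statement14 {R M : Type*} [CommRing R] [AddCommGroup M] [Module R M]
    (φ : Module.End R M) (a : R) (s : ℕ) (I : Fin (s + 2) → ℕ) :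
    ∃ z : (Fin (s + 2) → ℕ) → ℤ,
      (∀ K, ¬ LambdaAll K → z K = 0) ∧
      (∀ K : Fin (s + 2) → ℕ, (∑ i, I i) < (∑ i, K i) → z K = 0) ∧
      (∀ m : (Fin (s + 2) → ℕ) → M, delta φ a m = 0 →
        m I = ∑ d ∈ Finset.range ((∑ i, I i) + 1),
          ∑ K ∈ Finset.Nat.antidiagonalTuple (s + 2) d,
            z K • (Phi φ a d ((∑ i, I i) - d)) (m K)) ∧
      (LambdaAll I → z I = 1 ∧ ∀ K ≠ I, z K = 0) := by
  classical
  by_cases hL : LambdaAll I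
  · refine ⟨fun K => if K = I then 1 else 0, ?_, ?_, ?_, ?_⟩
    · exact (S14.rep_indicator φ a I hL).1
    · exact (S14.rep_indicator φ a I hL).2.1
    · exact (S14.rep_indicator φ a I hL).2.2
    · exact fun _ => ⟨if_pos rfl, fun K hK => if_neg hK⟩
  · obtain ⟨z, h1, h2, h3⟩ :=
      S14.exists_rep φ a ((∑ i, I i) * ((∑ i, I i) + 1) + I 0) I le_rfl
    exact ⟨z, h1, h2, h3, fun h => absurd h hL⟩
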